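/- If a Nuij sequence a ∈ ℝ^d admits a universal determinantal representation with associated symmetric matrix A, then for every j all j×j principal minors of A are equal; in particular all diagonal entries of A are equal to some α, and the squares of all off-diagonal entries are equal to some β². -/

import Mathlib

open Polynomial
open Finset

lemma det_piecewise_one (d : ℕ) (S : Finset (Fin d)) (B : Matrix (Fin d) (Fin d) ℝ) :
    Matrix.det (Matrix.of (S.piecewise (B : Fin d → Fin d → ℝ) (1 : Matrix (Fin d) (Fin d) ℝ)))
      = Matrix.det (B.submatrix (Subtype.val : {x // x ∈ S} → Fin d) Subtype.val) := by
  classical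
  set M : Matrix (Fin d) (Fin d) ℝ :=
    Matrix.of (S.piecewise (B : Fin d → Fin d → ℝ) (1 : Matrix (Fin d) (Fin d) ℝ))
  let e : {x // x ∈ S} ⊕ {x // x ∉ S} ≃ Fin d := Equiv.sumCompl (· ∈ S)
  have h1 : Matrix.det (M.submatrix e e) = Matrix.det M := Matrix.det_submatrix_equiv_self e M
  have h2 : M.submatrix e e =
      Matrix.fromBlocks (B.submatrix (Subtype.val : {x // x ∈ S} → Fin d) Subtype.val)
        (B.submatrix Subtype.val Subtype.val) 0 1 := by
    ext i j
    cases i with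
    | inl i =>
      cases j with
      | inl j =>
        simp [M, Matrix.submatrix, e, Finset.piecewise, i.2]
      | inr j =>
        simp [M, Matrix.submatrix, e, Finset.piecewise, i.2]
    | inr i =>
      cases j with
      | inl j =>
        have : (i : Fin d) ≠ (j : Fin d) := fun h => i.2 (h ▸ j.2)
        simp [M, Matrix.submatrix, e, Finset.piecewise, i.2,
          Matrix.one_apply, this]
      | inr j =>
        simp [M, Matrix.submatrix, e, Finset.piecewise, i.2,
          Matrix.one_apply, Subtype.ext_iff]
        congr
  rw [← h1, h2, Matrix.det_fromBlocks_zero₂₁, Matrix.det_one, mul_one]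

lemma det_diagonal_add (d : ℕ) (D : Fin d → ℝ) (B : Matrix (Fin d) (Fin d) ℝ) :
    (Matrix.diagonal D + B).det
      = ∑ S : Finset (Fin d), (∏ i ∈ Sᶜ, D i) *
          Matrix.det (B.submatrix (Subtype.val : {x // x ∈ S} → Fin d) Subtype.val) := by
  classical
  have h0 : (Matrix.diagonal D + B).det = (B + Matrix.diagonal D).det := by rw [add_comm]
  rw [h0]
  have h1 : (B + Matrix.diagonal D).det
      = ∑ S : Finset (Fin d),
          (Matrix.detRowAlternating : (Fin d → ℝ) [⋀^Fin d]→ₗ[ℝ] ℝ)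
            (S.piecewise B (Matrix.diagonal D)) :=
    (Matrix.detRowAlternating : (Fin d → ℝ) [⋀^Fin d]→ₗ[ℝ] ℝ).toMultilinearMap.map_add_univ
      B (Matrix.diagonal D)
  rw [h1]
  refine Finset.sum_congr rfl fun S _ => ?_
  have hv : S.piecewise (B : Fin d → Fin d → ℝ) (Matrix.diagonal D)
      = Sᶜ.piecewise (fun i => D i • (S.piecewise (B : Fin d → Fin d → ℝ) (1 : Matrix (Fin d) (Fin d) ℝ)) i)
          (S.piecewise (B : Fin d → Fin d → ℝ) (1 : Matrix (Fin d) (Fin d) ℝ)) := by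
    funext i
    by_cases hi : i ∈ S
    · simp only [Finset.piecewise]
      rw [if_pos hi,
        if_neg (by simpa using hi),
        if_pos hi]
    · simp only [Finset.piecewise]
      rw [if_neg hi,
        if_pos (by simpa using hi),
        if_neg hi]
      funext j
      simp [Matrix.diagonal, Matrix.one_apply]
  have hsm := (Matrix.detRowAlternating : (Fin d → ℝ) [⋀^Fin d]→ₗ[ℝ] ℝ).toMultilinearMap.map_piecewise_smul
    D (S.piecewise (B : Fin d → Fin d → ℝ) (1 : Matrix (Fin d) (Fin d) ℝ)) Sᶜ
  rw [AlternatingMap.coe_multilinearMap] at hsm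
  rw [hv, hsm, smul_eq_mul]
  congr 1
  exact det_piecewise_one d S B


/-- The perturbed polynomial `p_a(·, s) = p + ∑_{k=1}^d a_k s^k p^{(k)}`. -/
noncomputable def NuijPencil (d : ℕ) (a : ℕ → ℝ) (p : Polynomial ℝ) (s : ℝ) : Polynomial ℝ :=
  p + ∑ k ∈ Finset.Icc 1 d, (a k * s ^ k) • (Polynomial.derivative^[k] p)

lemma minor_value (d : ℕ) (a : ℕ → ℝ) (A : Matrix (Fin d) (Fin d) ℝ)
    (hrep : ∀ (lam : Fin d → ℝ) (z s : ℝ),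
      Matrix.det (z • (1 : Matrix (Fin d) (Fin d) ℝ) + Matrix.diagonal lam + s • A)
        = Polynomial.eval z (NuijPencil d a (∏ i, (X + Polynomial.C (lam i))) s))
    (S : Finset (Fin d)) (hS : 1 ≤ S.card) :
    Matrix.det (A.submatrix (Subtype.val : {x // x ∈ S} → Fin d) Subtype.val)
      = a S.card * (Nat.factorial S.card) := by
  classical
  set k := S.card with hk
  have hkd : k ≤ d := by simpa using S.card_le_univ
  let mT : Finset (Fin d) → ℝ := fun T =>
    Matrix.det (A.submatrix (Subtype.val : {x // x ∈ T} → Fin d) Subtype.val)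
  let lam : ℝ → Fin d → ℝ := fun t i => if i ∈ S then 0 else t
  let F : ℝ[X] := ∑ T : Finset (Fin d),
      if S ⊆ T then C (mT T) * X ^ (d - T.card) else 0
  let G : ℝ[X] := ∑ m ∈ Finset.Icc 1 d,
      if k ≤ m then C (a m * m.factorial * ((d - k).choose (m - k))) * X ^ (d - m) else 0
  -- evaluation of F
  have hF : ∀ t : ℝ, F.eval t = (Matrix.diagonal (lam t) + A).det := by
    intro t
    show Polynomial.eval t (∑ T : Finset (Fin d),
        if S ⊆ T then C (mT T) * X ^ (d - T.card) else 0) = (Matrix.diagonal (lam t) + A).det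
    rw [det_diagonal_add, eval_finset_sum]
    refine Finset.sum_congr rfl fun T _ => ?_
    by_cases hST : S ⊆ T
    · have hprod : (∏ i ∈ Tᶜ, lam t i) = t ^ (d - T.card) := by
        have h : ∀ i ∈ Tᶜ, lam t i = t := by
          intro i hi
          have : i ∉ S := fun h => (Finset.mem_compl.mp hi) (hST h)
          simp [lam, this]
        rw [Finset.prod_congr rfl h, Finset.prod_const, Finset.card_compl, Fintype.card_fin]
      rw [if_pos hST, hprod, eval_mul, eval_C, eval_pow, eval_X, mul_comm]
    · obtain ⟨i, hiS, hiT⟩ := Finset.not_subset.mp hST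
      have h : (∏ i ∈ Tᶜ, lam t i) = 0 :=
        Finset.prod_eq_zero (Finset.mem_compl.mpr hiT) (by simp [lam, hiS])
      rw [if_neg hST, h, zero_mul, eval_zero]
  -- the product polynomial
  have hprod : ∀ t : ℝ, (∏ i, (X + Polynomial.C (lam t i)))
      = X ^ k * (X + C t) ^ (d - k) := by
    intro t
    rw [← Finset.prod_mul_prod_compl S]
    have e1 : ∀ i ∈ S, (X + Polynomial.C (lam t i)) = (X : ℝ[X]) := by
      intro i hi; simp [lam, hi]
    have e2 : ∀ i ∈ Sᶜ, (X + Polynomial.C (lam t i)) = (X + C t : ℝ[X]) := by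
      intro i hi; simp [lam, Finset.mem_compl.mp hi]
    rw [Finset.prod_congr rfl e1, Finset.prod_congr rfl e2, Finset.prod_const,
      Finset.prod_const, Finset.card_compl, Fintype.card_fin, hk]
  have hcoeff : ∀ (t : ℝ) (m : ℕ), (X ^ k * (X + C t) ^ (d - k) : ℝ[X]).coeff m
      = if k ≤ m then t ^ (d - k - (m - k)) * ((d - k).choose (m - k)) else 0 := by
    intro t m
    rw [coeff_X_pow_mul']
    split_ifs with h
    · rw [coeff_X_add_C_pow]
    · rfl
  -- evaluation of G
  have hG : ∀ t : ℝ, G.eval t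
      = Polynomial.eval 0 (NuijPencil d a (∏ i, (X + Polynomial.C (lam t i))) 1) := by
    intro t
    have h0 : Polynomial.eval 0 (X ^ k * (X + C t) ^ (d - k) : ℝ[X]) = 0 := by
      rw [← coeff_zero_eq_eval_zero, hcoeff, if_neg (by omega)]
    show Polynomial.eval t (∑ m ∈ Finset.Icc 1 d,
        if k ≤ m then C (a m * m.factorial * ((d - k).choose (m - k))) * X ^ (d - m) else 0)
      = Polynomial.eval 0 (NuijPencil d a (∏ i, (X + Polynomial.C (lam t i))) 1)
    rw [hprod t, NuijPencil, eval_add, h0, zero_add]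
    simp only [eval_finset_sum]
    refine Finset.sum_congr rfl fun m hm => ?_
    have hm1 : 1 ≤ m := (Finset.mem_Icc.mp hm).1
    have hmd : m ≤ d := (Finset.mem_Icc.mp hm).2
    have hD : Polynomial.eval 0 (derivative^[m] (X ^ k * (X + C t) ^ (d - k) : ℝ[X]))
        = m.factorial * (if k ≤ m then t ^ (d - m) * ((d - k).choose (m - k)) else 0) := by
      rw [← coeff_zero_eq_eval_zero, coeff_iterate_derivative, hcoeff]
      simp only [zero_add, Nat.descFactorial_self]
      split_ifs with h
      · have : d - k - (m - k) = d - m := by omega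
        rw [this, nsmul_eq_mul]
      · simp
    rw [eval_smul, hD, smul_eq_mul]
    split_ifs with h
    · rw [eval_mul, eval_C, eval_pow, eval_X]
      ring
    · simp
  -- F = G
  have hFG : F = G := by
    refine Polynomial.funext fun t => ?_
    rw [hF t, hG t]
    have := hrep (lam t) 0 1
    simpa using this
  -- coefficients at d - k
  have hFc : F.coeff (d - k) = mT S := by
    show (∑ T : Finset (Fin d),
        if S ⊆ T then C (mT T) * X ^ (d - T.card) else 0).coeff (d - k) = mT S
    rw [finset_sum_coeff, Finset.sum_eq_single S]
    · rw [if_pos (Finset.Subset.refl S), coeff_C_mul, coeff_X_pow, if_pos rfl, mul_one]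
    · intro T _ hTS
      by_cases hST : S ⊆ T
      · have hTd : T.card ≤ d := by simpa using T.card_le_univ
        have hkT : k < T.card :=
          Finset.card_lt_card (Finset.ssubset_iff_subset_ne.mpr ⟨hST, fun h => hTS h.symm⟩)
        rw [if_pos hST, coeff_C_mul, coeff_X_pow, if_neg (by omega), mul_zero]
      · rw [if_neg hST, coeff_zero]
    · intro h
      exact absurd (Finset.mem_univ S) h
  have hGc : G.coeff (d - k) = a k * k.factorial := by
    show (∑ m ∈ Finset.Icc 1 d,
        if k ≤ m then C (a m * m.factorial * ((d - k).choose (m - k))) * X ^ (d - m)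
        else 0).coeff (d - k) = a k * k.factorial
    rw [finset_sum_coeff, Finset.sum_eq_single k]
    · rw [if_pos le_rfl, coeff_C_mul, coeff_X_pow, if_pos rfl, mul_one, Nat.sub_self,
        Nat.choose_zero_right]
      push_cast
      ring
    · intro m hm hmk
      have hm1 : 1 ≤ m := (Finset.mem_Icc.mp hm).1
      have hmd : m ≤ d := (Finset.mem_Icc.mp hm).2
      split_ifs with h
      · rw [coeff_C_mul, coeff_X_pow, if_neg (by omega), mul_zero]
      · rw [coeff_zero]
    · intro h
      exact absurd (Finset.mem_Icc.mpr ⟨hS, hkd⟩) h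
  have : mT S = a k * k.factorial := by rw [← hFc, hFG, hGc]
  exact this


/-- If a Nuij sequence `a` admits a universal determinantal representation with
symmetric matrix `A`, then all principal minors of `A` of a given size are
equal; in particular the diagonal entries are all equal to some `α` and the
squares of the off-diagonal entries are all equal to some `β²`. -/
theorem principal_minors_equal (d : ℕ) (a : ℕ → ℝ) (A : Matrix (Fin d) (Fin d) ℝ)
    (hA : A.IsSymm)
    (hrep : ∀ (lam : Fin d → ℝ) (z s : ℝ),
      Matrix.det (z • (1 : Matrix (Fin d) (Fin d) ℝ) + Matrix.diagonal lam + s • A)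
        = Polynomial.eval z (NuijPencil d a (∏ i, (X + Polynomial.C (lam i))) s)) :
    (∀ S T : Finset (Fin d), S.card = T.card →
      Matrix.det (A.submatrix (Subtype.val : {x // x ∈ S} → Fin d) Subtype.val)
        = Matrix.det (A.submatrix (Subtype.val : {x // x ∈ T} → Fin d) Subtype.val)) ∧
    (∃ α : ℝ, ∀ i, A i i = α) ∧
    (∃ β : ℝ, ∀ i j, i ≠ j → (A i j) ^ 2 = β ^ 2) := by
  classical
  have key := minor_value d a A hrep
  have hdiag : ∀ i : Fin d, A i i = a 1 * 1 := by
    intro i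
    letI : Unique {x // x ∈ ({i} : Finset (Fin d))} :=
      ⟨⟨⟨i, Finset.mem_singleton_self i⟩⟩, by
        rintro ⟨x, hx⟩
        exact Subtype.ext (by simpa using hx)⟩
    have h := key {i} (by simp)
    rw [Matrix.det_unique] at h
    simp only [Matrix.submatrix_apply] at h
    have hdef : ((default : {x // x ∈ ({i} : Finset (Fin d))}) : Fin d) = i := rfl
    rw [hdef] at h
    simpa using h
  have hpair : ∀ i j : Fin d, i ≠ j →
      A i i * A j j - A i j * A j i = a 2 * 2 := by
    intro i j hij
    have hij' : i ∉ ({j} : Finset (Fin d)) := by simpa using hij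
    have hcard : ({i, j} : Finset (Fin d)).card = 2 := by
      rw [Finset.card_insert_of_notMem hij', Finset.card_singleton]
    have h := key {i, j} (by rw [hcard]; norm_num)
    rw [hcard] at h
    have hiM : i ∈ ({i, j} : Finset (Fin d)) := by simp
    have hjM : j ∈ ({i, j} : Finset (Fin d)) := by simp
    let e : Fin 2 ≃ {x // x ∈ ({i, j} : Finset (Fin d))} :=
      { toFun := ![⟨i, hiM⟩, ⟨j, hjM⟩]
        invFun := fun x => if (x : Fin d) = i then 0 else 1
        left_inv := by
          intro x
          fin_cases x
          · simp
          · simp [hij.symm]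
        right_inv := by
          rintro ⟨x, hx⟩
          rcases Finset.mem_insert.mp hx with h1 | h1
          · subst h1
            simp
          · have h1 : x = j := Finset.mem_singleton.mp h1
            subst h1
            have hxi : ¬ x = i := fun h => hij h.symm
            simp [hxi] }
    have hdet := (Matrix.det_submatrix_equiv_self e
      (A.submatrix (Subtype.val : {x // x ∈ ({i, j} : Finset (Fin d))} → Fin d) Subtype.val)).symm
    rw [hdet, Matrix.det_fin_two] at h
    have e0 : ((e 0 : {x // x ∈ ({i, j} : Finset (Fin d))}) : Fin d) = i := rfl
    have e1 : ((e 1 : {x // x ∈ ({i, j} : Finset (Fin d))}) : Fin d) = j := rfl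
    simp only [Matrix.submatrix_apply, e0, e1] at h
    rw [h]
    norm_num
  refine ⟨?_, ⟨a 1 * 1, hdiag⟩, ?_⟩
  · intro S T hST
    rcases Nat.eq_zero_or_pos S.card with h0 | h1
    · have hS : S = ∅ := Finset.card_eq_zero.mp h0
      have hT : T = ∅ := Finset.card_eq_zero.mp (hST ▸ h0)
      rw [hS, hT]
    · rw [key S h1, key T (hST ▸ h1), hST]
  · have hsq : ∀ i j : Fin d, i ≠ j → (A i j) ^ 2 = (a 1 * 1) ^ 2 - a 2 * 2 := by
      intro i j hij
      have hsymm : A j i = A i j := by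
        have := congrFun (congrFun hA i) j
        simpa [Matrix.transpose_apply] using this
      have h := hpair i j hij
      rw [hdiag i, hdiag j, hsymm] at h
      nlinarith [h]
    by_cases hex : ∃ p : Fin d × Fin d, p.1 ≠ p.2
    · obtain ⟨⟨i0, j0⟩, h0⟩ := hex
      exact ⟨A i0 j0, fun i j hij => by rw [hsq i j hij, ← hsq i0 j0 h0]⟩
    · exact ⟨0, fun i j hij => absurd ⟨(i, j), hij⟩ hex⟩
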